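/- (Hölder inequality for sublinear monotone operators) Let X be a compact metric space and T : C(X) → C(X) a unital, sublinear and monotone operator. Then for all f, g ∈ C(X) and p ∈ (1,∞) with 1/p + 1/q = 1, one has T(|fg|) ≤ [T(|f|^p)]^{1/p} · [T(|g|^q)]^{1/q} pointwise. -/

import Mathlib

/-- Hölder's inequality for unital, sublinear and monotone operators on `C(X)`,
`X` a compact metric space: `T(|fg|) ≤ (T(|f|^p))^{1/p} · (T(|g|^q))^{1/q}` pointwise. -/
theorem stmt3 {X : Type*} [MetricSpace X] [CompactSpace X]
    (T : C(X, ℝ) → C(X, ℝ))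
    (hunit : T 1 = 1)
    (hsub : ∀ f g : C(X, ℝ), T (f + g) ≤ T f + T g)
    (hhom : ∀ (a : ℝ) (f : C(X, ℝ)), 0 ≤ a → T (a • f) = a • T f)
    (hmono : ∀ f g : C(X, ℝ), f ≤ g → T f ≤ T g)
    (p q : ℝ) (hp : 1 < p) (hpq : 1 / p + 1 / q = 1)
    (f g fg fp gq : C(X, ℝ))
    (hfg : ∀ x, fg x = |f x * g x|)
    (hfp : ∀ x, fp x = |f x| ^ p)
    (hgq : ∀ x, gq x = |g x| ^ q) :
    ∀ x, T fg x ≤ (T fp x) ^ (1 / p) * (T gq x) ^ (1 / q) := by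
  have hconj : Real.HolderConjugate p q := Real.holderConjugate_iff.mpr ⟨hp, by simpa [one_div] using hpq⟩
  have hq : 1 < q := hconj.symm.lt
  have hp0 : (0:ℝ) < p := hconj.pos
  have hq0 : (0:ℝ) < q := hconj.symm.pos
  -- T 0 = 0
  have hT0 : T 0 = 0 := by
    have := hhom 0 0 le_rfl
    simpa using this
  -- T fp ≥ 0, T gq ≥ 0
  have hfp0 : (0:C(X,ℝ)) ≤ fp := by
    intro x; simp [hfp x]; positivity
  have hgq0 : (0:C(X,ℝ)) ≤ gq := by
    intro x; simp [hgq x]; positivity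
  have hTfp : (0:C(X,ℝ)) ≤ T fp := hT0 ▸ hmono 0 fp hfp0
  have hTgq : (0:C(X,ℝ)) ≤ T gq := hT0 ▸ hmono 0 gq hgq0
  intro x
  set A := T fp x with hA
  set B := T gq x with hB
  set C := T fg x with hC
  have hA0 : 0 ≤ A := hTfp x
  have hB0 : 0 ≤ B := hTgq x
  -- key ε-inequality
  have key : ∀ ε : ℝ, 0 < ε → C ≤ ε ^ p / p * A + (ε ^ q * q)⁻¹ * B := by
    intro ε hε
    have hc1 : 0 ≤ ε ^ p / p := by positivity
    have hc2 : 0 ≤ (ε ^ q * q)⁻¹ := by positivity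
    have hle : fg ≤ (ε ^ p / p) • fp + (ε ^ q * q)⁻¹ • gq := by
      rw [ContinuousMap.le_def]
      intro y
      have hyoung := Real.young_inequality_of_nonneg
        (mul_nonneg hε.le (abs_nonneg (f y))) (div_nonneg (abs_nonneg (g y)) hε.le) hconj
      have h1 : (ε * |f y|) ^ p = ε ^ p * |f y| ^ p := Real.mul_rpow hε.le (abs_nonneg _)
      have h2 : (|g y| / ε) ^ q = |g y| ^ q / ε ^ q := Real.div_rpow (abs_nonneg _) hε.le q
      have h3 : ε * |f y| * (|g y| / ε) = |f y * g y| := by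
        rw [abs_mul]; field_simp
      rw [h1, h2, h3] at hyoung
      have hεp : (0:ℝ) < ε ^ p := Real.rpow_pos_of_pos hε p
      have hεq : (0:ℝ) < ε ^ q := Real.rpow_pos_of_pos hε q
      simp only [ContinuousMap.add_apply, ContinuousMap.smul_apply, smul_eq_mul]
      rw [hfg y, hfp y, hgq y]
      calc |f y * g y| ≤ ε ^ p * |f y| ^ p / p + |g y| ^ q / ε ^ q / q := hyoung
        _ = ε ^ p / p * |f y| ^ p + (ε ^ q * q)⁻¹ * |g y| ^ q := by
            field_simp
    have := hmono _ _ hle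
    have hsplit := hsub ((ε ^ p / p) • fp) ((ε ^ q * q)⁻¹ • gq)
    have h1 := hhom (ε ^ p / p) fp hc1
    have h2 := hhom (ε ^ q * q)⁻¹ gq hc2
    have hfinal : T fg x ≤ ((ε ^ p / p) • T fp + (ε ^ q * q)⁻¹ • T gq) x := by
      calc T fg x ≤ T ((ε ^ p / p) • fp + (ε ^ q * q)⁻¹ • gq) x := this x
        _ ≤ (T ((ε ^ p / p) • fp) + T ((ε ^ q * q)⁻¹ • gq)) x := hsplit x
        _ = ((ε ^ p / p) • T fp + (ε ^ q * q)⁻¹ • T gq) x := by rw [h1, h2]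
    simpa [hC, hA, hB] using hfinal
  -- bound with shifted A, B
  have main : ∀ δ : ℝ, 0 < δ → C ≤ (A + δ) ^ (1/p) * (B + δ) ^ (1/q) := by
    intro δ hδ
    set A' := A + δ with hA'
    set B' := B + δ with hB'
    have hA'0 : 0 < A' := by positivity
    have hB'0 : 0 < B' := by positivity
    set r := B' / A' with hr
    have hr0 : 0 < r := div_pos hB'0 hA'0
    set ε := r ^ (1 / (p * q)) with hε
    have hε0 : 0 < ε := Real.rpow_pos_of_pos hr0 _
    have hεp : ε ^ p = r ^ (1 / q) := by
      rw [hε, ← Real.rpow_mul hr0.le]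
      congr 1
      field_simp
    have hεq : ε ^ q = r ^ (1 / p) := by
      rw [hε, ← Real.rpow_mul hr0.le]
      congr 1
      field_simp
    have hrq : r ^ (1/q) = B' ^ (1/q) / A' ^ (1/q) := Real.div_rpow hB'0.le hA'0.le _
    have hrp : r ^ (1/p) = B' ^ (1/p) / A' ^ (1/p) := Real.div_rpow hB'0.le hA'0.le _
    have hAsplit : A' = A' ^ (1/p) * A' ^ (1/q) := by
      rw [← Real.rpow_add hA'0, hpq, Real.rpow_one]
    have hBsplit : B' = B' ^ (1/p) * B' ^ (1/q) := by
      rw [← Real.rpow_add hB'0, hpq, Real.rpow_one]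
    have hApq : 0 < A' ^ (1/p) := Real.rpow_pos_of_pos hA'0 _
    have hAq : 0 < A' ^ (1/q) := Real.rpow_pos_of_pos hA'0 _
    have hBp : 0 < B' ^ (1/p) := Real.rpow_pos_of_pos hB'0 _
    have hBq : 0 < B' ^ (1/q) := Real.rpow_pos_of_pos hB'0 _
    have step1 : C ≤ ε ^ p / p * A' + (ε ^ q * q)⁻¹ * B' := by
      refine le_trans (key ε hε0) ?_
      gcongr <;> linarith
    have hdivA : A' ^ (1/p) = A' / A' ^ (1/q) := by
      rw [show (1:ℝ)/p = 1 - 1/q by linarith, Real.rpow_sub hA'0, Real.rpow_one]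
    have hdivB : B' ^ (1/q) = B' / B' ^ (1/p) := by
      rw [show (1:ℝ)/q = 1 - 1/p by linarith, Real.rpow_sub hB'0, Real.rpow_one]
    have hcompute : ε ^ p / p * A' + (ε ^ q * q)⁻¹ * B'
        = A' ^ (1/p) * B' ^ (1/q) := by
      have e1 : B' ^ (1/q) / A' ^ (1/q) / p * A'
          = 1/p * (A' ^ (1/p) * B' ^ (1/q)) := by
        rw [hdivA]; field_simp
      have e2 : (B' ^ (1/p) / A' ^ (1/p) * q)⁻¹ * B'
          = 1/q * (A' ^ (1/p) * B' ^ (1/q)) := by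
        rw [hdivB]; field_simp
      rw [hεp, hεq, hrq, hrp, e1, e2, ← add_mul, hpq, one_mul]
    calc C ≤ _ := step1
      _ = (A + δ) ^ (1/p) * (B + δ) ^ (1/q) := hcompute
  -- take the limit δ → 0⁺
  have hcont : Filter.Tendsto (fun δ : ℝ => (A + δ) ^ (1/p) * (B + δ) ^ (1/q))
      (nhdsWithin 0 (Set.Ioi 0)) (nhds (A ^ (1/p) * B ^ (1/q))) := by
    have hA1 : ContinuousAt (fun δ : ℝ => (A + δ) ^ (1/p)) 0 := by
      have : ContinuousAt (fun y : ℝ => y ^ (1/p)) (A + 0) :=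
        Real.continuousAt_rpow_const _ _ (Or.inr (by positivity))
      exact this.comp (by fun_prop)
    have hB1 : ContinuousAt (fun δ : ℝ => (B + δ) ^ (1/q)) 0 := by
      have : ContinuousAt (fun y : ℝ => y ^ (1/q)) (B + 0) :=
        Real.continuousAt_rpow_const _ _ (Or.inr (by positivity))
      exact this.comp (by fun_prop)
    have := (hA1.mul hB1).continuousWithinAt (s := Set.Ioi 0)
    simpa [Pi.mul_def] using this.tendsto
  refine ge_of_tendsto hcont ?_
  filter_upwards [self_mem_nhdsWithin] with δ hδ
  exact main δ hδ
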